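/- Let A take values in a finite set 𝒜, Z a random variable, and suppose the positivity condition P(A = a | Z) > 0 a.s. for every a ∈ 𝒜. Then for a bounded random variable Y with Y(a) ⫫ A | Z and consistency Y = Y(A), the map h(a) = E[E[Y | A = a, Z]] satisfies h(a) = E[Y(a)] for all a ∈ 𝒜, and the inverse-probability-weighting identity E[Y(a)] = E[ 1{A = a} Y / P(A = a | Z) ] also holds. -/

import Mathlib

open MeasureTheory ProbabilityTheory Filter
open scoped ENNReal NNReal

/-- With `A` taking values in a finite set, positivity `P(A = a | Z) > 0` a.s., bounded potential
outcomes `Y(a)` with `Y(a) ⫫ A | Z`, and consistency `Y = Y(A)`: every measurable version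
`h(A, Z)` of `E[Y | A, Z]` satisfies `E[h(a, Z)] = E[Y(a)]`, and the inverse-probability-weighting
identity `E[Y(a)] = E[ 1{A = a} Y / P(A = a | Z) ]` holds. -/
theorem stmt9 {Ω : Type*} {mΩ : MeasurableSpace Ω} [StandardBorelSpace Ω]
    (μ : Measure Ω) [IsProbabilityMeasure μ]
    {𝒜 : Type*} [Fintype 𝒜] [DecidableEq 𝒜] [MeasurableSpace 𝒜] [DiscreteMeasurableSpace 𝒜]
    {γ : Type*} [MeasurableSpace γ] [StandardBorelSpace γ]
    (A : Ω → 𝒜) (Z : Ω → γ) (Ypot : 𝒜 → Ω → ℝ) (Yobs : Ω → ℝ)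
    (hA : Measurable A) (hZ : Measurable Z)
    (hbdd : ∃ C : ℝ, ∀ b ω, |Ypot b ω| ≤ C)
    (hYmeas : ∀ b, Measurable (Ypot b))
    (hconsist : ∀ ω, Yobs ω = Ypot (A ω) ω)
    (hci : ∀ b : 𝒜, CondIndepFun (MeasurableSpace.comap Z inferInstance) hZ.comap_le
      (Ypot b) A μ)
    (hpos : ∀ b : 𝒜, ∀ᵐ ω ∂μ, 0 < (μ[(fun ω' => if A ω' = b then (1 : ℝ) else 0) |
      MeasurableSpace.comap Z inferInstance]) ω)
    (a : 𝒜) :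
    (∀ h : 𝒜 × γ → ℝ, Measurable h →
      ((fun ω => h (A ω, Z ω)) =ᵐ[μ]
        μ[Yobs | MeasurableSpace.comap (fun ω => (A ω, Z ω)) inferInstance]) →
      Integrable (fun ω => h (a, Z ω)) μ →
      ∫ ω, h (a, Z ω) ∂μ = ∫ ω, Ypot a ω ∂μ) ∧
    ∫ ω, Ypot a ω ∂μ =
      ∫ ω, (if A ω = a then Yobs ω else 0) /
        (μ[(fun ω' => if A ω' = a then (1 : ℝ) else 0) |
          MeasurableSpace.comap Z inferInstance]) ω ∂μ := by
  obtain ⟨C₀, hC₀⟩ := hbdd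
  set C : ℝ := max C₀ 0 with hCdef
  have hC : ∀ b ω, |Ypot b ω| ≤ C := fun b ω => (hC₀ b ω).trans (le_max_left _ _)
  have hC0 : 0 ≤ C := le_max_right _ _
  have hmZ : MeasurableSpace.comap Z (inferInstance : MeasurableSpace γ) ≤ mΩ := hZ.comap_le
  set ind : Ω → ℝ := fun ω' => if A ω' = a then (1 : ℝ) else 0 with hinddef
  set e : Ω → ℝ := μ[ind | (MeasurableSpace.comap Z inferInstance)] with hedef
  -- basic integrability helper
  have intOf : ∀ (φ : Ω → ℝ), AEStronglyMeasurable φ μ → ∀ (D : ℝ),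
      (∀ᵐ ω ∂μ, |φ ω| ≤ D) → Integrable φ μ := fun φ hφ D hD =>
    ⟨hφ, HasFiniteIntegral.of_bounded (C := D)
      (by filter_upwards [hD] with ω h; simpa [Real.norm_eq_abs] using h)⟩
  -- pull-out lemma
  have pull : ∀ (m : MeasurableSpace Ω), m ≤ mΩ → ∀ (u w : Ω → ℝ), StronglyMeasurable[m] u →
      Integrable (fun ω => u ω * w ω) μ → Integrable w μ →
      ∫ ω, u ω * w ω ∂μ = ∫ ω, u ω * (μ[w|m]) ω ∂μ := by
    intro m hm u w hu hint hw
    have h1 := condExp_mul_of_stronglyMeasurable_left (μ := μ) hu hint hw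
    rw [← integral_condExp (μ := μ) hm (f := fun ω => u ω * w ω)]
    exact integral_congr_ae h1
  -- measurability of ind
  have hAa : MeasurableSet[mΩ] (A ⁻¹' {a}) := hA (MeasurableSet.singleton a)
  have hind_meas : Measurable[mΩ] ind := Measurable.ite (p := fun ω => A ω = a) hAa measurable_const measurable_const
  have hind01 : ∀ ω, 0 ≤ ind ω ∧ ind ω ≤ 1 := by
    intro ω; by_cases h : A ω = a <;> simp [hinddef, h]
  have hind_int : Integrable ind μ := intOf ind hind_meas.aestronglyMeasurable 1
    (ae_of_all _ fun ω => abs_le.2 ⟨by linarith [(hind01 ω).1], (hind01 ω).2⟩)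
  -- e facts
  have heSM : StronglyMeasurable[(MeasurableSpace.comap Z inferInstance)] e := stronglyMeasurable_condExp
  have heM : Measurable[mΩ] e := (heSM.mono hmZ).measurable
  have he0 : ∀ᵐ ω ∂μ, 0 ≤ e ω := condExp_nonneg (ae_of_all _ fun ω => (hind01 ω).1)
  have he1 : ∀ᵐ ω ∂μ, e ω ≤ 1 := by
    have h1 : ind ≤ᵐ[μ] fun _ => (1 : ℝ) := ae_of_all _ fun ω => (hind01 ω).2
    have := condExp_mono (m := (MeasurableSpace.comap Z inferInstance)) hind_int (integrable_const 1) h1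
    filter_upwards [this] with ω h
    rw [condExp_const hmZ] at h
    exact h
  have hepos : ∀ᵐ ω ∂μ, 0 < e ω := hpos a
  -- integrability of Ypot b
  have hYint : ∀ b, Integrable (Ypot b) μ := fun b =>
    intOf _ (hYmeas b).aestronglyMeasurable C (ae_of_all _ fun ω => hC b ω)
  -- conditional independence: product rule for indicators
  have hciMul : ∀ t : Set ℝ, MeasurableSet t →
      (μ[fun ω => Set.indicator ((Ypot a) ⁻¹' t) (fun _ => (1:ℝ)) ω * ind ω | (MeasurableSpace.comap Z inferInstance)]) =ᵐ[μ]
      fun ω => (μ[((Ypot a) ⁻¹' t).indicator (fun _ => (1:ℝ))|(MeasurableSpace.comap Z inferInstance)]) ω * e ω := by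
    intro t ht
    have h1 := (condIndepFun_iff_condExp_inter_preimage_eq_mul (μ := μ)
      (hYmeas a) hA).1 (hci a) t {a} ht (MeasurableSet.singleton a)
    have e1 : (A ⁻¹' {a}).indicator (fun _ => (1:ℝ)) = ind := by
      funext ω; by_cases h : A ω = a <;> simp [hinddef, Set.indicator_apply, h]
    have e2 : (((Ypot a) ⁻¹' t) ∩ A ⁻¹' {a}).indicator (fun _ => (1:ℝ))
        = fun ω => Set.indicator ((Ypot a) ⁻¹' t) (fun _ => (1:ℝ)) ω * ind ω := by
      funext ω
      by_cases h : Ypot a ω ∈ t <;> by_cases h' : A ω = a <;>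
        simp [hinddef, Set.indicator_apply, h, h']
    rw [e1, e2, ← hedef] at h1
    exact h1
  -- the core identity from conditional independence
  have core : ∀ u : Ω → ℝ, StronglyMeasurable[(MeasurableSpace.comap Z inferInstance)] u → (∀ᵐ ω ∂μ, 0 ≤ u ω) →
      ∀ D : ℝ, (∀ᵐ ω ∂μ, u ω ≤ D) →
      ∫ ω, Ypot a ω * (ind ω * u ω) ∂μ = ∫ ω, Ypot a ω * (e ω * u ω) ∂μ := by
    intro u huSMz hu0 D huD
    have huM' : Measurable[mΩ] u := (huSMz.mono hmZ).measurable
    have hD0 : 0 ≤ D := by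
      by_contra hDneg
      push_neg at hDneg
      have hbad : ∀ᵐ ω ∂μ, False := by
        filter_upwards [hu0, huD] with ω h h'
        linarith
      haveI : (ae μ).NeBot := ae_neBot.2 (IsProbabilityMeasure.ne_zero μ)
      exact hbad.exists.choose_spec
    -- integrands
    have hw₁_meas : Measurable[mΩ] (fun ω => ind ω * u ω) := hind_meas.mul huM'
    have hw₂_meas : Measurable[mΩ] (fun ω => e ω * u ω) := heM.mul huM'
    have hw₁0 : ∀ᵐ ω ∂μ, 0 ≤ ind ω * u ω := by
      filter_upwards [hu0] with ω h; exact mul_nonneg (hind01 ω).1 h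
    have hw₂0 : ∀ᵐ ω ∂μ, 0 ≤ e ω * u ω := by
      filter_upwards [he0, hu0] with ω h h'; exact mul_nonneg h h'
    have hw₁bdd : ∀ᵐ ω ∂μ, |ind ω * u ω| ≤ D := by
      filter_upwards [hu0, huD] with ω h h'
      rw [abs_of_nonneg (mul_nonneg (hind01 ω).1 h)]
      calc ind ω * u ω ≤ 1 * u ω := mul_le_mul_of_nonneg_right (hind01 ω).2 h
        _ = u ω := one_mul _
        _ ≤ D := h'
    have hw₂bdd : ∀ᵐ ω ∂μ, |e ω * u ω| ≤ D := by
      filter_upwards [he0, he1, hu0, huD] with ω h0 h1 h h'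
      rw [abs_of_nonneg (mul_nonneg h0 h)]
      calc e ω * u ω ≤ 1 * u ω := mul_le_mul_of_nonneg_right h1 h
        _ = u ω := one_mul _
        _ ≤ D := h'
    have hw₁int : Integrable (fun ω => ind ω * u ω) μ :=
      intOf _ hw₁_meas.aestronglyMeasurable D hw₁bdd
    have hw₂int : Integrable (fun ω => e ω * u ω) μ :=
      intOf _ hw₂_meas.aestronglyMeasurable D hw₂bdd
    -- Claim A: equality against indicator test functions
    have claimA : ∀ t : Set ℝ, MeasurableSet t →
        ∫ ω, Set.indicator ((Ypot a) ⁻¹' t) (fun _ => (1:ℝ)) ω * (ind ω * u ω) ∂μ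
          = ∫ ω, Set.indicator ((Ypot a) ⁻¹' t) (fun _ => (1:ℝ)) ω * (e ω * u ω) ∂μ := by
      intro t ht
      have hpre : MeasurableSet[mΩ] ((Ypot a) ⁻¹' t) := (hYmeas a) ht
      set It : Ω → ℝ := ((Ypot a) ⁻¹' t).indicator (fun _ => (1:ℝ)) with hItdef
      have hIt01 : ∀ ω, 0 ≤ It ω ∧ It ω ≤ 1 := by
        intro ω; by_cases h : Ypot a ω ∈ t <;> simp [hItdef, Set.indicator_apply, h]
      have hItmeas : Measurable[mΩ] It := measurable_const.indicator hpre
      have hItint : Integrable It μ := intOf _ hItmeas.aestronglyMeasurable 1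
        (ae_of_all _ fun ω => abs_le.2 ⟨by linarith [(hIt01 ω).1], (hIt01 ω).2⟩)
      have hItind_int : Integrable (fun ω => It ω * ind ω) μ :=
        intOf _ (hItmeas.mul hind_meas).aestronglyMeasurable 1
          (ae_of_all _ fun ω => abs_le.2 ⟨by nlinarith [(hIt01 ω).1, (hind01 ω).1],
            by nlinarith [(hIt01 ω).1, (hIt01 ω).2, (hind01 ω).1, (hind01 ω).2]⟩)
      have huIt_int : Integrable (fun ω => u ω * (It ω * ind ω)) μ :=
        intOf _ (huM'.mul (hItmeas.mul hind_meas)).aestronglyMeasurable D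
          (by filter_upwards [hu0, huD] with ω h h'
              have h1 : (0:ℝ) ≤ It ω * ind ω := mul_nonneg (hIt01 ω).1 (hind01 ω).1
              have h2 : It ω * ind ω ≤ 1 := by
                nlinarith [(hIt01 ω).1, (hIt01 ω).2, (hind01 ω).1, (hind01 ω).2]
              rw [abs_of_nonneg (mul_nonneg h h1)]
              calc u ω * (It ω * ind ω) ≤ u ω * 1 := mul_le_mul_of_nonneg_left h2 h
                _ = u ω := mul_one _
                _ ≤ D := h')
      have heuIt_int : Integrable (fun ω => (e ω * u ω) * It ω) μ :=
        intOf _ (hw₂_meas.mul hItmeas).aestronglyMeasurable D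
          (by filter_upwards [hw₂0, hw₂bdd] with ω h h'
              rw [abs_mul]
              calc |e ω * u ω| * |It ω| ≤ D * 1 := by
                    refine mul_le_mul h' (abs_le.2 ⟨by linarith [(hIt01 ω).1], (hIt01 ω).2⟩)
                      (abs_nonneg _) hD0
                _ = D := mul_one _)
      have l1 : ∫ ω, It ω * (ind ω * u ω) ∂μ = ∫ ω, u ω * (It ω * ind ω) ∂μ :=
        integral_congr_ae (ae_of_all _ fun ω => by ring)
      have l2 := pull (MeasurableSpace.comap Z inferInstance) hmZ u (fun ω => It ω * ind ω) huSMz huIt_int hItind_int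
      have l3 : ∫ ω, u ω * (μ[fun ω' => It ω' * ind ω'|(MeasurableSpace.comap Z inferInstance)]) ω ∂μ
          = ∫ ω, u ω * ((μ[It|(MeasurableSpace.comap Z inferInstance)]) ω * e ω) ∂μ := by
        refine integral_congr_ae ?_
        filter_upwards [hciMul t ht] with ω h
        rw [← hItdef] at h
        rw [h]
      have r1 : ∫ ω, It ω * (e ω * u ω) ∂μ = ∫ ω, (e ω * u ω) * It ω ∂μ :=
        integral_congr_ae (ae_of_all _ fun ω => by ring)
      have r2 := pull (MeasurableSpace.comap Z inferInstance) hmZ (fun ω => e ω * u ω) It (heSM.mul huSMz) heuIt_int hItint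
      have fin : ∫ ω, u ω * ((μ[It|(MeasurableSpace.comap Z inferInstance)]) ω * e ω) ∂μ
          = ∫ ω, (e ω * u ω) * (μ[It|(MeasurableSpace.comap Z inferInstance)]) ω ∂μ :=
        integral_congr_ae (ae_of_all _ fun ω => by ring)
      rw [l1, l2, l3, fin, r1, r2]
    -- measure equality via uniqueness
    have hmeq : @Measure.map Ω ℝ mΩ _ (Ypot a) (μ.withDensity fun ω => ENNReal.ofReal (ind ω * u ω))
        = @Measure.map Ω ℝ mΩ _ (Ypot a) (μ.withDensity fun ω => ENNReal.ofReal (e ω * u ω)) := by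
      ext t ht
      rw [Measure.map_apply (hYmeas a) ht, Measure.map_apply (hYmeas a) ht,
        withDensity_apply _ ((hYmeas a) ht), withDensity_apply _ ((hYmeas a) ht),
        ← ofReal_integral_eq_lintegral_ofReal (hw₁int.restrict) (ae_restrict_of_ae hw₁0),
        ← ofReal_integral_eq_lintegral_ofReal (hw₂int.restrict) (ae_restrict_of_ae hw₂0)]
      congr 1
      have ii1 : ∫ ω, (((Ypot a) ⁻¹' t).indicator fun ω' => ind ω' * u ω') ω ∂μ
          = ∫ x in (Ypot a) ⁻¹' t, ind x * u x ∂μ :=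
        by apply integral_indicator; exact (hYmeas a) ht
      have ii2 : ∫ ω, (((Ypot a) ⁻¹' t).indicator fun ω' => e ω' * u ω') ω ∂μ
          = ∫ x in (Ypot a) ⁻¹' t, e x * u x ∂μ :=
        by apply integral_indicator; exact (hYmeas a) ht
      have g1 : ∫ ω, (((Ypot a) ⁻¹' t).indicator fun ω' => ind ω' * u ω') ω ∂μ
          = ∫ ω, Set.indicator ((Ypot a) ⁻¹' t) (fun _ => (1:ℝ)) ω * (ind ω * u ω) ∂μ :=
        integral_congr_ae (Filter.Eventually.of_forall fun ω => by
          by_cases h : Ypot a ω ∈ t <;> simp [Set.indicator_apply, h])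
      have g2 : ∫ ω, (((Ypot a) ⁻¹' t).indicator fun ω' => e ω' * u ω') ω ∂μ
          = ∫ ω, Set.indicator ((Ypot a) ⁻¹' t) (fun _ => (1:ℝ)) ω * (e ω * u ω) ∂μ :=
        integral_congr_ae (Filter.Eventually.of_forall fun ω => by
          by_cases h : Ypot a ω ∈ t <;> simp [Set.indicator_apply, h])
      rw [← ii1, ← ii2, g1, g2]
      exact claimA t ht
    -- integrate the identity function
    have m1 : ∫ x, x ∂(@Measure.map Ω ℝ mΩ _ (Ypot a) (μ.withDensity fun ω => ENNReal.ofReal (ind ω * u ω)))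
        = ∫ ω, Ypot a ω ∂(μ.withDensity fun ω => ENNReal.ofReal (ind ω * u ω)) :=
      integral_map (hYmeas a).aemeasurable aestronglyMeasurable_id
    have m2 : ∫ x, x ∂(@Measure.map Ω ℝ mΩ _ (Ypot a) (μ.withDensity fun ω => ENNReal.ofReal (e ω * u ω)))
        = ∫ ω, Ypot a ω ∂(μ.withDensity fun ω => ENNReal.ofReal (e ω * u ω)) :=
      integral_map (hYmeas a).aemeasurable aestronglyMeasurable_id
    have hint_eq : ∫ ω, Ypot a ω ∂(μ.withDensity fun ω => ENNReal.ofReal (ind ω * u ω))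
        = ∫ ω, Ypot a ω ∂(μ.withDensity fun ω => ENNReal.ofReal (e ω * u ω)) := by
      rw [← m1, ← m2, hmeq]
    simp only [ENNReal.ofReal] at hint_eq
    have w1 : ∫ ω, Ypot a ω ∂(μ.withDensity fun ω => (((ind ω * u ω).toNNReal : NNReal) : ℝ≥0∞))
        = ∫ ω, (Real.toNNReal (ind ω * u ω)) • Ypot a ω ∂μ := by
      apply integral_withDensity_eq_integral_smul
      exact hw₁_meas.real_toNNReal
    have w2 : ∫ ω, Ypot a ω ∂(μ.withDensity fun ω => (((e ω * u ω).toNNReal : NNReal) : ℝ≥0∞))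
        = ∫ ω, (Real.toNNReal (e ω * u ω)) • Ypot a ω ∂μ := by
      apply integral_withDensity_eq_integral_smul
      exact hw₂_meas.real_toNNReal
    rw [w1, w2] at hint_eq
    have c1 : ∫ ω, (ind ω * u ω).toNNReal • Ypot a ω ∂μ
        = ∫ ω, Ypot a ω * (ind ω * u ω) ∂μ := by
      refine integral_congr_ae ?_
      filter_upwards [hw₁0] with ω h
      rw [NNReal.smul_def, Real.coe_toNNReal _ h, smul_eq_mul]
      ring
    have c2 : ∫ ω, (e ω * u ω).toNNReal • Ypot a ω ∂μ
        = ∫ ω, Ypot a ω * (e ω * u ω) ∂μ := by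
      refine integral_congr_ae ?_
      filter_upwards [hw₂0] with ω h
      rw [NNReal.smul_def, Real.coe_toNNReal _ h, smul_eq_mul]
      ring
    rw [c1, c2] at hint_eq
    exact hint_eq
  -- the truncation sequence
  set u : ℕ → Ω → ℝ := fun n ω => min (n : ℝ) (e ω)⁻¹ with hudef
  have huSM : ∀ n, StronglyMeasurable[(MeasurableSpace.comap Z inferInstance)] (u n) := by
    intro n
    have heM' : Measurable[(MeasurableSpace.comap Z inferInstance)] e := heSM.measurable
    exact (measurable_const.min heM'.inv).stronglyMeasurable
  have huM : ∀ n, Measurable[mΩ] (u n) := fun n => measurable_const.min heM.inv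
  have hu0 : ∀ n, ∀ᵐ ω ∂μ, 0 ≤ u n ω := by
    intro n
    filter_upwards [hepos] with ω h
    exact le_min (Nat.cast_nonneg n) (inv_nonneg.2 h.le)
  have huD : ∀ n, ∀ᵐ ω ∂μ, u n ω ≤ (n : ℝ) := fun n => ae_of_all _ fun ω => min_le_left _ _
  have hue : ∀ n, ∀ᵐ ω ∂μ, 0 ≤ e ω * u n ω ∧ e ω * u n ω ≤ 1 := by
    intro n
    filter_upwards [hepos] with ω h
    constructor
    · exact mul_nonneg h.le (le_min (Nat.cast_nonneg n) (inv_nonneg.2 h.le))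
    · calc e ω * u n ω ≤ e ω * (e ω)⁻¹ := by
            exact mul_le_mul_of_nonneg_left (min_le_right _ _) h.le
        _ = 1 := mul_inv_cancel₀ h.ne'
  have hu_tendsto : ∀ᵐ ω ∂μ, Tendsto (fun n => u n ω) atTop (nhds (e ω)⁻¹) := by
    filter_upwards [hepos] with ω _
    apply tendsto_atTop_of_eventually_const (i₀ := ⌈(e ω)⁻¹⌉₊)
    intro n hn
    exact min_eq_right ((Nat.le_ceil _).trans (Nat.cast_le.2 hn))
  -- integrability of ind / e
  have hg₀_meas : Measurable[mΩ] (fun ω => ind ω * (e ω)⁻¹) := hind_meas.mul heM.inv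
  have hbound_n : ∀ n : ℕ, ∫ ω, u n ω * ind ω ∂μ ≤ 1 := by
    intro n
    have hun_ind_int : Integrable (fun ω => u n ω * ind ω) μ :=
      intOf _ ((huM n).mul hind_meas).aestronglyMeasurable n
        (by filter_upwards [hu0 n] with ω h
            rw [abs_of_nonneg (mul_nonneg h (hind01 ω).1)]
            calc u n ω * ind ω ≤ u n ω * 1 := mul_le_mul_of_nonneg_left (hind01 ω).2 h
              _ = u n ω := mul_one _
              _ ≤ n := min_le_left _ _)
    rw [pull (MeasurableSpace.comap Z inferInstance) hmZ (u n) ind (huSM n) hun_ind_int hind_int,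
      ← hedef]
    have hune_int : Integrable (fun ω => u n ω * e ω) μ :=
      intOf _ ((huM n).mul heM).aestronglyMeasurable 1
        (by filter_upwards [hue n] with ω h
            rw [abs_of_nonneg (by rw [mul_comm]; exact h.1)]
            rw [mul_comm]; exact h.2)
    calc ∫ ω, u n ω * e ω ∂μ ≤ ∫ _ω, (1:ℝ) ∂μ := by
          refine integral_mono_ae hune_int (integrable_const 1) ?_
          filter_upwards [hue n] with ω h
          rw [mul_comm]; exact h.2
      _ = 1 := by simp
  have hg₀_lint : ∫⁻ ω, ENNReal.ofReal (ind ω * (e ω)⁻¹) ∂μ ≤ 1 := by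
    have hlim : ∀ᵐ ω ∂μ, Tendsto (fun n => ENNReal.ofReal (ind ω * u n ω)) atTop
        (nhds (ENNReal.ofReal (ind ω * (e ω)⁻¹))) := by
      filter_upwards [hu_tendsto] with ω hω
      exact (ENNReal.continuous_ofReal.tendsto _).comp (hω.const_mul (ind ω))
    have hliminf : (fun ω => ENNReal.ofReal (ind ω * (e ω)⁻¹)) =ᵐ[μ]
        fun ω => Filter.liminf (fun n => ENNReal.ofReal (ind ω * u n ω)) atTop := by
      filter_upwards [hlim] with ω hω
      exact hω.liminf_eq.symm
    calc ∫⁻ ω, ENNReal.ofReal (ind ω * (e ω)⁻¹) ∂μ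
        = ∫⁻ ω, Filter.liminf (fun n => ENNReal.ofReal (ind ω * u n ω)) atTop ∂μ :=
          lintegral_congr_ae hliminf
      _ ≤ Filter.liminf (fun n => ∫⁻ ω, ENNReal.ofReal (ind ω * u n ω) ∂μ) atTop :=
          lintegral_liminf_le fun n => (hind_meas.mul (huM n)).ennreal_ofReal
      _ ≤ 1 := by
          refine Filter.liminf_le_of_le (by isBoundedDefault) ?_
          intro b hb
          rcases (hb.and (Filter.Eventually.of_forall fun n => True.intro)).exists with ⟨n, hn, _⟩
          refine hn.trans ?_
          have hint_un : Integrable (fun ω => ind ω * u n ω) μ :=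
            intOf _ (hind_meas.mul (huM n)).aestronglyMeasurable n
              (by filter_upwards [hu0 n] with ω h
                  rw [abs_of_nonneg (mul_nonneg (hind01 ω).1 h)]
                  calc ind ω * u n ω ≤ 1 * u n ω := mul_le_mul_of_nonneg_right (hind01 ω).2 h
                    _ = u n ω := one_mul _
                    _ ≤ n := min_le_left _ _)
          have hnn : 0 ≤ᵐ[μ] fun ω => ind ω * u n ω := by
            filter_upwards [hu0 n] with ω h; exact mul_nonneg (hind01 ω).1 h
          rw [← ofReal_integral_eq_lintegral_ofReal hint_un hnn]
          have : ∫ ω, ind ω * u n ω ∂μ ≤ 1 := by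
            rw [show (fun ω => ind ω * u n ω) = fun ω => u n ω * ind ω from
              funext fun ω => mul_comm _ _]
            exact hbound_n n
          calc ENNReal.ofReal (∫ ω, ind ω * u n ω ∂μ) ≤ ENNReal.ofReal 1 :=
                ENNReal.ofReal_le_ofReal this
            _ = 1 := ENNReal.ofReal_one
  have hg₀_int : Integrable (fun ω => ind ω * (e ω)⁻¹) μ := by
    refine ⟨hg₀_meas.aestronglyMeasurable, ?_⟩
    have heq : ∫⁻ ω, (‖ind ω * (e ω)⁻¹‖₊ : ℝ≥0∞) ∂μ
        = ∫⁻ ω, ENNReal.ofReal (ind ω * (e ω)⁻¹) ∂μ := by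
      refine lintegral_congr_ae ?_
      filter_upwards [hepos] with ω hω
      rw [← enorm_eq_nnnorm, Real.enorm_eq_ofReal (mul_nonneg (hind01 ω).1 (inv_nonneg.2 hω.le))]
    show (∫⁻ ω, (‖ind ω * (e ω)⁻¹‖₊ : ℝ≥0∞) ∂μ) < ⊤
    rw [heq]
    exact lt_of_le_of_lt hg₀_lint ENNReal.one_lt_top
  -- key identity (IPW)
  have he_mul_tendsto : ∀ᵐ ω ∂μ, Tendsto (fun n => e ω * u n ω) atTop (nhds 1) := by
    filter_upwards [hepos, hu_tendsto] with ω h1 h2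
    have h3 := h2.const_mul (e ω)
    rwa [mul_inv_cancel₀ h1.ne'] at h3
  have key2 : ∫ ω, Ypot a ω ∂μ = ∫ ω, Ypot a ω * (ind ω * (e ω)⁻¹) ∂μ := by
    have hseq : ∀ n : ℕ, ∫ ω, Ypot a ω * (ind ω * u n ω) ∂μ
        = ∫ ω, Ypot a ω * (e ω * u n ω) ∂μ :=
      fun n => core (u n) (huSM n) (hu0 n) n (huD n)
    have T2 : Tendsto (fun n => ∫ ω, Ypot a ω * (e ω * u n ω) ∂μ) atTop
        (nhds (∫ ω, Ypot a ω ∂μ)) := by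
      refine tendsto_integral_of_dominated_convergence (fun _ => C)
        (fun n => ((hYmeas a).mul (heM.mul (huM n))).aestronglyMeasurable)
        (integrable_const C) (fun n => ?_) ?_
      · filter_upwards [hue n] with ω hb
        rw [Real.norm_eq_abs, abs_mul]
        have := mul_le_mul (hC a ω) (abs_le.2 ⟨by linarith [hb.1], hb.2⟩) (abs_nonneg _) hC0
        simpa using this
      · filter_upwards [he_mul_tendsto] with ω hω
        simpa using hω.const_mul (Ypot a ω)
    have T1 : Tendsto (fun n => ∫ ω, Ypot a ω * (ind ω * u n ω) ∂μ) atTop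
        (nhds (∫ ω, Ypot a ω * (ind ω * (e ω)⁻¹) ∂μ)) := by
      refine tendsto_integral_of_dominated_convergence
        (fun ω => C * (ind ω * (e ω)⁻¹))
        (fun n => ((hYmeas a).mul (hind_meas.mul (huM n))).aestronglyMeasurable)
        (hg₀_int.const_mul C) (fun n => ?_) ?_
      · filter_upwards [hepos, hu0 n] with ω h1 h2
        rw [Real.norm_eq_abs, abs_mul]
        have h3 : |ind ω * u n ω| ≤ ind ω * (e ω)⁻¹ := by
          rw [abs_of_nonneg (mul_nonneg (hind01 ω).1 h2)]
          exact mul_le_mul_of_nonneg_left (min_le_right _ _) (hind01 ω).1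
        exact mul_le_mul (hC a ω) h3 (abs_nonneg _) hC0
      · filter_upwards [hu_tendsto] with ω hω
        exact ((hω.const_mul (ind ω)).const_mul (Ypot a ω))
    rw [show (fun n => ∫ ω, Ypot a ω * (ind ω * u n ω) ∂μ)
        = fun n => ∫ ω, Ypot a ω * (e ω * u n ω) ∂μ from funext hseq] at T1
    exact tendsto_nhds_unique T2 T1
  constructor
  · intro h hhmeas hver hint
    set q : Ω → ℝ := fun ω => h (a, Z ω) with hqdef
    have hmAZ : MeasurableSpace.comap (fun ω => (A ω, Z ω))
        (inferInstance : MeasurableSpace (𝒜 × γ)) ≤ mΩ := (hA.prodMk hZ).comap_le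
    have hZle : MeasurableSpace.comap Z (inferInstance : MeasurableSpace γ) ≤
        MeasurableSpace.comap (fun ω => (A ω, Z ω)) (inferInstance : MeasurableSpace (𝒜 × γ)) := by
      rintro s ⟨t, ht, rfl⟩
      refine ⟨Set.univ ×ˢ t, MeasurableSet.univ.prod ht, ?_⟩
      ext ω; simp
    set Ycond : Ω → ℝ := μ[Yobs | MeasurableSpace.comap (fun ω => (A ω, Z ω)) inferInstance]
      with hYconddef
    -- measurability facts
    have hcomapAZ : Measurable[MeasurableSpace.comap (fun ω => (A ω, Z ω))
        (inferInstance : MeasurableSpace (𝒜 × γ))] (fun ω => (A ω, Z ω)) :=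
      measurable_iff_comap_le.mpr le_rfl
    have hcomapZ : Measurable[MeasurableSpace.comap Z (inferInstance : MeasurableSpace γ)] Z :=
      measurable_iff_comap_le.mpr le_rfl
    have hqSM : StronglyMeasurable[MeasurableSpace.comap Z (inferInstance : MeasurableSpace γ)]
        q := by
      have : Measurable[MeasurableSpace.comap Z (inferInstance : MeasurableSpace γ)] q :=
        (hhmeas.comp (measurable_const.prodMk measurable_id)).comp hcomapZ
      exact this.stronglyMeasurable
    have hqM : Measurable[mΩ] q := (hqSM.mono hmZ).measurable
    have hindAZ : Measurable[MeasurableSpace.comap (fun ω => (A ω, Z ω))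
        (inferInstance : MeasurableSpace (𝒜 × γ))] ind := by
      have h1 : Measurable (fun p : 𝒜 × γ => if p.1 = a then (1:ℝ) else 0) :=
        Measurable.ite (p := fun p : 𝒜 × γ => p.1 = a)
          (measurable_fst (MeasurableSet.singleton a)) measurable_const measurable_const
      exact h1.comp hcomapAZ
    have heAZ : Measurable[MeasurableSpace.comap (fun ω => (A ω, Z ω))
        (inferInstance : MeasurableSpace (𝒜 × γ))] e := (heSM.mono hZle).measurable
    -- Yobs facts
    have hYobs_bdd : ∀ ω, |Yobs ω| ≤ C := fun ω => by rw [hconsist ω]; exact hC _ ω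
    have hYobs_meas : Measurable[mΩ] Yobs := by
      have hsum : Yobs = fun ω => ∑ b : 𝒜, (if A ω = b then Ypot b ω else 0) := by
        funext ω
        rw [hconsist ω, Finset.sum_eq_single_of_mem (A ω) (Finset.mem_univ _)
          (fun b _ hb => if_neg fun hh => hb hh.symm), if_pos rfl]
      rw [hsum]
      exact Finset.measurable_sum _ fun b _ =>
        Measurable.ite (p := fun ω => A ω = b) (hA (MeasurableSet.singleton b))
          (hYmeas b) measurable_const
    have hYobs_int : Integrable Yobs μ :=
      intOf _ hYobs_meas.aestronglyMeasurable C (ae_of_all _ hYobs_bdd)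
    have hYcond_bdd : ∀ᵐ ω ∂μ, |Ycond ω| ≤ C := by
      have hup : Ycond ≤ᵐ[μ] fun _ => C := by
        have := condExp_mono (m := MeasurableSpace.comap (fun ω => (A ω, Z ω)) inferInstance)
          hYobs_int (integrable_const C) (ae_of_all _ fun ω => (abs_le.1 (hYobs_bdd ω)).2)
        rw [condExp_const hmAZ] at this
        rw [hYconddef]
        exact this
      have hdown : (fun _ => -C) ≤ᵐ[μ] Ycond := by
        have := condExp_mono (m := MeasurableSpace.comap (fun ω => (A ω, Z ω)) inferInstance)
          (integrable_const (-C)) hYobs_int (ae_of_all _ fun ω => (abs_le.1 (hYobs_bdd ω)).1)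
        rw [condExp_const hmAZ] at this
        rw [hYconddef]
        exact this
      filter_upwards [hup, hdown] with ω h1 h2
      exact abs_le.2 ⟨h2, h1⟩
    have hq_ind_eq : ∀ ω, ind ω * q ω = ind ω * h (A ω, Z ω) := by
      intro ω
      by_cases hω : A ω = a
      · rw [hqdef]; simp only [hω]
      · simp [hinddef, if_neg hω]
    have hdom : ∀ᵐ ω ∂μ, |ind ω * q ω| ≤ C * ind ω := by
      filter_upwards [hver, hYcond_bdd] with ω h1 h2
      rw [hq_ind_eq ω, h1, abs_mul, abs_of_nonneg (hind01 ω).1]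
      calc ind ω * |Ycond ω| ≤ ind ω * C := mul_le_mul_of_nonneg_left h2 (hind01 ω).1
        _ = C * ind ω := mul_comm _ _
    -- E1 : ∫ (q e⁻¹) ind = ∫ q
    have hfacSM : StronglyMeasurable[MeasurableSpace.comap Z (inferInstance : MeasurableSpace γ)]
        (fun ω => q ω * (e ω)⁻¹) := by
      have : Measurable[MeasurableSpace.comap Z (inferInstance : MeasurableSpace γ)]
          (fun ω => q ω * (e ω)⁻¹) := (hqSM.measurable).mul (heSM.measurable).inv
      exact this.stronglyMeasurable
    have hint1 : Integrable (fun ω => q ω * (e ω)⁻¹ * ind ω) μ := by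
      refine (hg₀_int.const_mul C).mono' ((hqM.mul heM.inv).mul hind_meas).aestronglyMeasurable ?_
      filter_upwards [hdom, hepos] with ω h1 h3
      have h4 : |q ω| * ind ω ≤ C * ind ω := by
        rwa [abs_mul, abs_of_nonneg (hind01 ω).1, mul_comm] at h1
      calc ‖q ω * (e ω)⁻¹ * ind ω‖ = |q ω| * (e ω)⁻¹ * ind ω := by
            rw [Real.norm_eq_abs, abs_mul, abs_mul, abs_of_nonneg (inv_nonneg.2 h3.le),
              abs_of_nonneg (hind01 ω).1]
        _ = |q ω| * ind ω * (e ω)⁻¹ := by ring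
        _ ≤ C * ind ω * (e ω)⁻¹ := mul_le_mul_of_nonneg_right h4 (inv_nonneg.2 h3.le)
        _ = C * (ind ω * (e ω)⁻¹) := by ring
    have E1 : ∫ ω, q ω * (e ω)⁻¹ * ind ω ∂μ = ∫ ω, q ω ∂μ := by
      have hp := pull (MeasurableSpace.comap Z inferInstance) hmZ
        (fun ω => q ω * (e ω)⁻¹) ind hfacSM hint1 hind_int
      rw [← hedef] at hp
      rw [hp]
      refine integral_congr_ae ?_
      filter_upwards [hepos] with ω hω
      calc q ω * (e ω)⁻¹ * e ω = q ω * ((e ω)⁻¹ * e ω) := by ring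
        _ = q ω := by rw [inv_mul_cancel₀ hω.ne', mul_one]
    -- E2 : replace q by Ycond
    have E2 : ∫ ω, q ω * (e ω)⁻¹ * ind ω ∂μ = ∫ ω, Ycond ω * (e ω)⁻¹ * ind ω ∂μ := by
      refine integral_congr_ae ?_
      filter_upwards [hver] with ω h1
      have h2 : ind ω * q ω = ind ω * Ycond ω := by rw [hq_ind_eq ω, h1]
      calc q ω * (e ω)⁻¹ * ind ω = ind ω * q ω * (e ω)⁻¹ := by ring
        _ = ind ω * Ycond ω * (e ω)⁻¹ := by rw [h2]
        _ = Ycond ω * (e ω)⁻¹ * ind ω := by ring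
    -- E3 : replace Ycond by Yobs via pull-out at the (A,Z) σ-algebra
    have hu'SM : StronglyMeasurable[MeasurableSpace.comap (fun ω => (A ω, Z ω))
        (inferInstance : MeasurableSpace (𝒜 × γ))] (fun ω => (e ω)⁻¹ * ind ω) :=
      (heAZ.inv.mul hindAZ).stronglyMeasurable
    have hint3 : Integrable (fun ω => (e ω)⁻¹ * ind ω * Yobs ω) μ := by
      refine (hg₀_int.const_mul C).mono'
        (((heM.inv.mul hind_meas).mul hYobs_meas)).aestronglyMeasurable ?_
      filter_upwards [hepos] with ω h3
      calc ‖(e ω)⁻¹ * ind ω * Yobs ω‖ = (e ω)⁻¹ * ind ω * |Yobs ω| := by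
            rw [Real.norm_eq_abs, abs_mul, abs_mul, abs_of_nonneg (inv_nonneg.2 h3.le),
              abs_of_nonneg (hind01 ω).1]
        _ ≤ (e ω)⁻¹ * ind ω * C := by
            refine mul_le_mul_of_nonneg_left (hYobs_bdd ω) ?_
            exact mul_nonneg (inv_nonneg.2 h3.le) (hind01 ω).1
        _ = C * (ind ω * (e ω)⁻¹) := by ring
    have E3 : ∫ ω, (e ω)⁻¹ * ind ω * Yobs ω ∂μ = ∫ ω, (e ω)⁻¹ * ind ω * Ycond ω ∂μ := by
      have hp := pull (MeasurableSpace.comap (fun ω => (A ω, Z ω)) inferInstance) hmAZ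
        (fun ω => (e ω)⁻¹ * ind ω) Yobs hu'SM hint3 hYobs_int
      rw [← hYconddef] at hp
      exact hp
    -- E4 : consistency
    have E4 : ∫ ω, (e ω)⁻¹ * ind ω * Yobs ω ∂μ = ∫ ω, Ypot a ω * (ind ω * (e ω)⁻¹) ∂μ := by
      refine integral_congr_ae (Filter.Eventually.of_forall fun ω => ?_)
      show (e ω)⁻¹ * ind ω * Yobs ω = Ypot a ω * (ind ω * (e ω)⁻¹)
      by_cases hω : A ω = a
      · rw [hconsist ω, hω]; ring
      · simp [hinddef, if_neg hω]
    have E2' : ∫ ω, Ycond ω * (e ω)⁻¹ * ind ω ∂μ = ∫ ω, (e ω)⁻¹ * ind ω * Ycond ω ∂μ :=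
      integral_congr_ae (Filter.Eventually.of_forall fun ω => by ring)
    calc ∫ ω, h (a, Z ω) ∂μ = ∫ ω, q ω ∂μ := rfl
      _ = ∫ ω, q ω * (e ω)⁻¹ * ind ω ∂μ := E1.symm
      _ = ∫ ω, Ycond ω * (e ω)⁻¹ * ind ω ∂μ := E2
      _ = ∫ ω, (e ω)⁻¹ * ind ω * Ycond ω ∂μ := E2'
      _ = ∫ ω, (e ω)⁻¹ * ind ω * Yobs ω ∂μ := E3.symm
      _ = ∫ ω, Ypot a ω * (ind ω * (e ω)⁻¹) ∂μ := E4
      _ = ∫ ω, Ypot a ω ∂μ := key2.symm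
  · rw [key2]
    apply integral_congr_ae
    filter_upwards [] with ω
    by_cases h : A ω = a
    · simp only [hinddef, if_pos h, mul_one, one_mul]
      rw [hconsist ω, h, div_eq_mul_inv]
    · simp [hinddef, if_neg h]
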